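/- Suppose f₁, f₂, g₁, g₂ are integer polynomials with f₁(0) ≠ 0 and f₂(0) ≠ 0, f₁ and f₂ coprime, and (f₁(x)/f₂(x))^n = g₁(x^k)/g₂(x^k) as rational functions for positive integers n and k. Then there exist integer polynomials h₁, h₂ such that f₁(x)/f₂(x) = h₁(x^k)/h₂(x^k). -/
import Mathlib

open Polynomial

private lemma coeff_comp_C_mul_X {R : Type*} [CommSemiring R] (p : R[X]) (a : R) (i : ℕ) :
    (p.comp (C a * X)).coeff i = p.coeff i * a ^ i := by
  induction p using Polynomial.induction_on' with
  | add p q hp hq => simp [add_comp, hp, hq, add_mul]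
  | monomial m c =>
      simp only [monomial_comp, mul_pow, ← C_pow, ← mul_assoc, ← C_mul, coeff_C_mul,
        coeff_X_pow, coeff_monomial]
      split_ifs with h h' h'
      · subst h; ring
      · exact absurd h.symm h'
      · exact absurd h'.symm h
      · simp

private lemma eq_comp_of_dvd {f : Polynomial ℤ} {k : ℕ} (hk : 0 < k)
    (h : ∀ i, f.coeff i ≠ 0 → k ∣ i) : ∃ h₁ : Polynomial ℤ, f = h₁.comp (X ^ k) := by
  refine ⟨contract k f, ?_⟩
  rw [← expand_eq_comp_X_pow]
  ext i
  rw [coeff_expand hk, ]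
  split_ifs with hd
  · rw [coeff_contract hk.ne', Nat.div_mul_cancel hd]
  · exact of_not_not fun hc => hd (h i hc)

theorem stmt_2 (f₁ f₂ g₁ g₂ : Polynomial ℤ) (n k : ℕ) (hn : 0 < n) (hk : 0 < k)
    (hf₁0 : f₁.eval 0 ≠ 0) (hf₂0 : f₂.eval 0 ≠ 0)
    (hcop : IsCoprime f₁ f₂) (hf₂ : f₂ ≠ 0) (hg₂ : g₂ ≠ 0)
    (heq : f₁ ^ n * g₂.comp (X ^ k) = f₂ ^ n * g₁.comp (X ^ k)) :
    ∃ h₁ h₂ : Polynomial ℤ, f₁ = h₁.comp (X ^ k) ∧ f₂ = h₂.comp (X ^ k) := by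
  obtain ⟨ζ, hζ⟩ : ∃ ζ : ℂ, IsPrimitiveRoot ζ k := ⟨_, Complex.isPrimitiveRoot_exp k hk.ne'⟩
  have hζk : ζ ^ k = 1 := hζ.pow_eq_one
  set c : ℤ →+* ℂ := Int.castRingHom ℂ
  have cinj : Function.Injective c := Int.cast_injective
  set F₁ : ℂ[X] := f₁.map c with hF₁def
  set F₂ : ℂ[X] := f₂.map c with hF₂def
  set G₁ : ℂ[X] := (g₁.map c).comp (X ^ k) with hG₁def
  set G₂ : ℂ[X] := (g₂.map c).comp (X ^ k) with hG₂def
  -- the mapped equation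
  have heqC : F₁ ^ n * G₂ = F₂ ^ n * G₁ := by
    have := congrArg (Polynomial.map c) heq
    simpa [Polynomial.map_mul, Polynomial.map_pow, Polynomial.map_comp] using this
  set A : ℂ[X] := F₁.comp (C ζ * X) with hAdef
  set B : ℂ[X] := F₂.comp (C ζ * X) with hBdef
  have hXk : ((X : ℂ[X]) ^ k).comp (C ζ * X) = X ^ k := by
    simp [pow_comp, mul_pow, ← C_pow, hζk]
  have hGcomp₁ : G₁.comp (C ζ * X) = G₁ := by
    rw [hG₁def, comp_assoc, hXk]
  have hGcomp₂ : G₂.comp (C ζ * X) = G₂ := by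
    rw [hG₂def, comp_assoc, hXk]
  have heqC2 : A ^ n * G₂ = B ^ n * G₁ := by
    have := congrArg (fun p => p.comp (C ζ * X)) heqC
    simpa [mul_comp, pow_comp, hGcomp₁, hGcomp₂] using this
  have hF₁ne : F₁ ≠ 0 := by
    rw [hF₁def, Ne, Polynomial.map_eq_zero_iff cinj]
    exact fun h => hf₁0 (by simp [h])
  have hF₂ne : F₂ ≠ 0 := by
    rw [hF₂def, Ne, Polynomial.map_eq_zero_iff cinj]
    exact fun h => hf₂0 (by simp [h])
  have hG₂ne : G₂ ≠ 0 := by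
    rw [hG₂def, ← expand_eq_comp_X_pow]
    rw [expand_ne_zero hk]
    exact fun h => hg₂ (map_injective c cinj (by simpa using h))
  -- key power equation
  have hpow : (A * F₂) ^ n = (B * F₁) ^ n := by
    have h1 : (A * F₂) ^ n * G₂ = (B * F₁) ^ n * G₂ := by
      rw [mul_pow, mul_pow]
      calc A ^ n * F₂ ^ n * G₂ = F₂ ^ n * (A ^ n * G₂) := by ring
        _ = F₂ ^ n * (B ^ n * G₁) := by rw [heqC2]
        _ = B ^ n * (F₂ ^ n * G₁) := by ring
        _ = B ^ n * (F₁ ^ n * G₂) := by rw [← heqC]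
        _ = B ^ n * F₁ ^ n * G₂ := by ring
    exact mul_right_cancel₀ hG₂ne h1
  have hassoc : Associated (A * F₂) (B * F₁) := by
    refine associated_of_dvd_dvd ?_ ?_
    · exact (IsIntegrallyClosed.pow_dvd_pow_iff hn.ne').mp (hpow ▸ dvd_rfl)
    · exact (IsIntegrallyClosed.pow_dvd_pow_iff hn.ne').mp (hpow ▸ dvd_rfl)
  -- evaluation at zero
  have hA0 : A.eval 0 = F₁.eval 0 := by simp [hAdef, eval_comp]
  have hB0 : B.eval 0 = F₂.eval 0 := by simp [hBdef, eval_comp]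
  have hF₁0 : F₁.eval 0 ≠ 0 := by
    rw [hF₁def, eval_zero_map]
    exact fun h => hf₁0 (cinj (by simpa using h))
  have hF₂0 : F₂.eval 0 ≠ 0 := by
    rw [hF₂def, eval_zero_map]
    exact fun h => hf₂0 (cinj (by simpa using h))
  -- upgrade associated to equality
  obtain ⟨u, hu⟩ := hassoc
  obtain ⟨r, hr, hru⟩ := Polynomial.isUnit_iff.mp u.isUnit
  have hAB : A * F₂ = B * F₁ := by
    have h0 : (A * F₂ * C r).eval 0 = (B * F₁).eval 0 := by rw [hru, hu]
    simp only [eval_mul, eval_C, hA0, hB0] at h0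
    have hr1 : r = 1 := by
      refine mul_left_cancel₀ (mul_ne_zero hF₁0 hF₂0) ?_
      rw [mul_one]; linear_combination h0
    rw [← hu, ← hru, hr1]; simp
  have hcopC : IsCoprime F₁ F₂ := hcop.map (mapRingHom c)
  have hcopAB : IsCoprime A B := hcopC.map (compRingHom (C ζ * X))
  -- F₁ = A and F₂ = B
  have key : ∀ (F G : ℂ[X]), IsCoprime F G → F.eval 0 ≠ 0 →
      F.comp (C ζ * X) * G = G.comp (C ζ * X) * F →
      IsCoprime (F.comp (C ζ * X)) (G.comp (C ζ * X)) →
      F.comp (C ζ * X) = F := by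
    intro F G hc h0 habk hcab
    have h1 : F ∣ F.comp (C ζ * X) :=
      hc.dvd_of_dvd_mul_right ⟨G.comp (C ζ * X), by linear_combination habk⟩
    have h2 : F.comp (C ζ * X) ∣ F :=
      hcab.dvd_of_dvd_mul_right ⟨G, by linear_combination -habk⟩
    obtain ⟨v, hv⟩ := associated_of_dvd_dvd h1 h2
    obtain ⟨s, hs, hsv⟩ := Polynomial.isUnit_iff.mp v.isUnit
    have h0' : (F * C s).eval 0 = (F.comp (C ζ * X)).eval 0 := by rw [hsv, hv]
    simp only [eval_mul, eval_C, eval_comp, eval_mul, eval_C, eval_X, mul_zero, eval_comp] at h0'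
    have hs1 : s = 1 := mul_left_cancel₀ h0 (h0'.trans (mul_one _).symm)
    rw [← hv, ← hsv, hs1]; simp
  have hA : A = F₁ := key F₁ F₂ hcopC hF₁0 hAB hcopAB
  have hB : B = F₂ := by
    refine key F₂ F₁ hcopC.symm hF₂0 ?_ hcopAB.symm
    linear_combination -hAB
  -- deduce divisibility of exponents
  have hdvd : ∀ (f : Polynomial ℤ), f.map c = (f.map c).comp (C ζ * X) →
      ∀ i, f.coeff i ≠ 0 → k ∣ i := by
    intro f hf i hi
    have := congrArg (fun p => p.coeff i) hf
    simp only [coeff_comp_C_mul_X, coeff_map] at this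
    have hci : (f.coeff i : ℂ) ≠ 0 := fun h => hi (cinj (by simpa using h))
    have hζi : ζ ^ i = 1 :=
      mul_left_cancel₀ hci (this.symm.trans (mul_one _).symm)
    exact hζ.dvd_of_pow_eq_one i hζi
  obtain ⟨h₁, hh₁⟩ := eq_comp_of_dvd hk (hdvd f₁ hA.symm)
  obtain ⟨h₂, hh₂⟩ := eq_comp_of_dvd hk (hdvd f₂ hB.symm)
  exact ⟨h₁, h₂, hh₁, hh₂⟩
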